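/- For each n ≥ 1, let μ_n be a measure on graphs with vertex set a subset of [n] that is multiplicative on components (if G has components H₁,…,H_k then μ_n(G) = ∏ μ_n(H_i)). Suppose there exist α > 0 and integers n ≥ m₀ ≥ 1 such that μ_n(G²_V) ≤ α·μ_n(G¹_V) for all V ⊆ [n] with |V| ≥ m₀, where G^k_V is the set of graphs on vertex set V with exactly k components. Then for all integers k ≥ 1 with n ≥ k·m₀, μ_n(G^{k+1}_{[n]}) ≤ (α/k)·μ_n(G^k_{[n]}). -/

import Mathlib

open scoped Classical

/-- Number of connected components of a graph. -/
noncomputable def kappa {V : Type*} (G : SimpleGraph V) : ℕ :=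
  Nat.card G.ConnectedComponent

/-- Number of bridges of a graph. -/
noncomputable def numBridges {V : Type*} (G : SimpleGraph V) : ℕ :=
  {e : Sym2 V | G.IsBridge e}.ncard

/-- Number of unordered pairs of vertices lying in distinct components. -/
noncomputable def cross {V : Type*} (G : SimpleGraph V) : ℕ :=
  {p : Sym2 V | ∃ u v : V, p = s(u, v) ∧ ¬ G.Reachable u v}.ncard

/-- Number of vertices outside a largest component. -/
noncomputable def frag {V : Type*} [Fintype V] (G : SimpleGraph V) : ℕ :=
  Fintype.card V - ⨆ c : G.ConnectedComponent, c.supp.ncard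

/-- The graph obtained by deleting all bridges. -/
def debridge {V : Type*} (G : SimpleGraph V) : SimpleGraph V :=
  G.deleteEdges {e : Sym2 V | G.IsBridge e}

/-- The weight τ(G) = f(G̃) · λ^{e₀(G)} · ν^{κ(G)}. -/
noncomputable def tau {V : Type*} (f : SimpleGraph V → ℝ) (lam nu : ℝ)
    (G : SimpleGraph V) : ℝ :=
  f (debridge G) * lam ^ numBridges G * nu ^ kappa G

/-- Adding the edge uv to a graph. -/
def addEdge {V : Type*} (G : SimpleGraph V) (u v : V) : SimpleGraph V :=
  G ⊔ SimpleGraph.fromEdgeSet {s(u, v)}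

/-- A class of graphs is bridge-addable if adding an edge between two vertices in
distinct components of a member yields a member. -/
def BridgeAddable {V : Type*} (A : Set (SimpleGraph V)) : Prop :=
  ∀ G ∈ A, ∀ u v : V, ¬ G.Reachable u v → addEdge G u v ∈ A

/-- P(Po(α) ≥ t), the upper tail of a Poisson distribution with mean α. -/
noncomputable def poissonTail (α : ℝ) (t : ℕ) : ℝ :=
  ∑' i : ℕ, if t ≤ i then Real.exp (-α) * α ^ i / (Nat.factorial i) else 0

/-- The disjoint union of a graph on `V₁` and a graph on `V₂`, viewed as a graph
on `V₁ ∪ V₂` (no edges between the two parts). -/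
def glue {n : ℕ} (V₁ V₂ : Finset (Fin n)) (G₁ : SimpleGraph ↥V₁)
    (G₂ : SimpleGraph ↥V₂) : SimpleGraph ↥(V₁ ∪ V₂) where
  Adj a b :=
    (∃ (ha : ↑a ∈ V₁) (hb : ↑b ∈ V₁), G₁.Adj ⟨a, ha⟩ ⟨b, hb⟩) ∨
      (∃ (ha : ↑a ∈ V₂) (hb : ↑b ∈ V₂), G₂.Adj ⟨a, ha⟩ ⟨b, hb⟩)
  symm := by
    constructor
    rintro a b (⟨ha, hb, h⟩ | ⟨ha, hb, h⟩)
    · exact Or.inl ⟨hb, ha, h.symm⟩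
    · exact Or.inr ⟨hb, ha, h.symm⟩
  loopless := by
    constructor
    rintro a (⟨ha, hb, h⟩ | ⟨ha, hb, h⟩)
    · exact G₁.irrefl h
    · exact G₂.irrefl h

set_option linter.unusedSectionVars false

section Stmt14Aux
open Finset

namespace Stmt14
open SimpleGraph Finset

variable {V A B : Type*}

lemma reach_closed {G : SimpleGraph V} {p : V → Prop}
    (hcl : ∀ v w, G.Adj v w → (p v ↔ p w)) {u v : V} (h : G.Reachable u v) :
    p u ↔ p v := by
  obtain ⟨w⟩ := h
  induction w with
  | nil => rfl
  | cons h _ ih => exact (hcl _ _ h).trans ih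

lemma reachable_comap {G : SimpleGraph V} (f : A → V)
    (hf : Function.Injective f)
    (hcl : ∀ v w, G.Adj v w → ((∃ a, f a = v) ↔ (∃ a, f a = w)))
    {u v : A} (h : G.Reachable (f u) (f v)) : (G.comap f).Reachable u v := by
  obtain ⟨w⟩ := h
  have key : ∀ x y (w : G.Walk x y) (a b : A), f a = x → f b = y →
      (G.comap f).Reachable a b := by
    intro x y w
    induction w with
    | nil =>
      intro a b ha hb
      have : a = b := hf (ha.trans hb.symm)
      subst this
      exact Reachable.refl a
    | @cons x z y hadj w ih =>
      intro a b ha hb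
      have hz : ∃ c, f c = z := (hcl x z hadj).mp ⟨a, ha⟩
      obtain ⟨c, hc⟩ := hz
      have h1 : (G.comap f).Adj a c := by
        show G.Adj (f a) (f c); rw [ha, hc]; exact hadj
      exact (h1.reachable).trans (ih c b hc hb)
  exact key _ _ w u v rfl rfl

lemma reachable_of_comap {G : SimpleGraph V} (f : A → V) {u v : A}
    (h : (G.comap f).Reachable u v) : G.Reachable (f u) (f v) :=
  h.map (⟨f, fun h => h⟩ : G.comap f →g G)

lemma kappa_split [Finite V] (G : SimpleGraph V) (f : A → V) (g : B → V)
    (hf : Function.Injective f) (hg : Function.Injective g)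
    (hdisj : ∀ a b, f a ≠ g b)
    (hcov : ∀ v, (∃ a, f a = v) ∨ (∃ b, g b = v))
    (hcl : ∀ v w, G.Adj v w → ((∃ a, f a = v) ↔ (∃ a, f a = w))) :
    kappa G = kappa (G.comap f) + kappa (G.comap g) := by
  have hA : Finite A := Finite.of_injective f hf
  have hB : Finite B := Finite.of_injective g hg
  have hFf : Finite (G.comap f).ConnectedComponent := Quot.finite _
  have hFg : Finite (G.comap g).ConnectedComponent := Quot.finite _
  -- forward map
  let F : V → (G.comap f).ConnectedComponent ⊕ (G.comap g).ConnectedComponent :=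
    fun v => if h : ∃ a, f a = v then Sum.inl ((G.comap f).connectedComponentMk h.choose)
      else Sum.inr ((G.comap g).connectedComponentMk ((hcov v).resolve_left h).choose)
  have hFadj : ∀ v w, G.Adj v w → F v = F w := by
    intro v w hadj
    by_cases h : ∃ a, f a = v
    · have h' : ∃ a, f a = w := (hcl v w hadj).mp h
      simp only [F, dif_pos h, dif_pos h']
      refine congrArg _ (ConnectedComponent.eq.mpr ?_)
      refine Adj.reachable ?_
      show G.Adj (f h.choose) (f h'.choose)
      rw [h.choose_spec, h'.choose_spec]; exact hadj
    · have h' : ¬ ∃ a, f a = w := fun hw => h ((hcl v w hadj).mpr hw)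
      simp only [F, dif_neg h, dif_neg h']
      refine congrArg _ (ConnectedComponent.eq.mpr ?_)
      refine Adj.reachable ?_
      show G.Adj (g _) (g _)
      rw [((hcov v).resolve_left h).choose_spec, ((hcov w).resolve_left h').choose_spec]
      exact hadj
  have hFreach : ∀ v w, G.Reachable v w → F v = F w := by
    intro v w h
    obtain ⟨p⟩ := h
    induction p with
    | nil => rfl
    | cons h _ ih => exact (hFadj _ _ h).trans ih
  let toF : G.ConnectedComponent → _ := Quot.lift F hFreach
  let back : (G.comap f).ConnectedComponent ⊕ (G.comap g).ConnectedComponent →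
      G.ConnectedComponent :=
    Sum.elim
      (Quot.lift (fun a => G.connectedComponentMk (f a))
        (fun a b h => ConnectedComponent.eq.mpr (reachable_of_comap f h)))
      (Quot.lift (fun b => G.connectedComponentMk (g b))
        (fun a b h => ConnectedComponent.eq.mpr (reachable_of_comap g h)))
  have hleft : ∀ c, back (toF c) = c := by
    refine Quot.ind ?_
    intro v
    by_cases h : ∃ a, f a = v
    · show back (F v) = _
      simp only [F, dif_pos h]
      show G.connectedComponentMk (f h.choose) = _
      rw [h.choose_spec]; rfl
    · show back (F v) = _
      simp only [F, dif_neg h]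
      show G.connectedComponentMk (g _) = _
      rw [((hcov v).resolve_left h).choose_spec]; rfl
  have hright : ∀ s, toF (back s) = s := by
    rintro (c | c)
    · obtain ⟨a, rfl⟩ := c.exists_rep
      show F (f a) = _
      have h : ∃ a', f a' = f a := ⟨a, rfl⟩
      simp only [F, dif_pos h]
      exact congrArg Sum.inl (congrArg _ (hf h.choose_spec))
    · obtain ⟨b, rfl⟩ := c.exists_rep
      show F (g b) = _
      have h : ¬ ∃ a', f a' = g b := fun ⟨a, ha⟩ => hdisj a b ha
      simp only [F, dif_neg h]
      exact congrArg Sum.inr (congrArg _ (hg ((hcov (g b)).resolve_left h).choose_spec))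
  have e : G.ConnectedComponent ≃
      (G.comap f).ConnectedComponent ⊕ (G.comap g).ConnectedComponent :=
    ⟨toF, back, hleft, hright⟩
  show Nat.card _ = Nat.card _ + Nat.card _
  rw [Nat.card_congr e, Nat.card_sum]

variable {V : Type*} [Fintype V]

noncomputable def cF (G : SimpleGraph V) (v : V) : Finset V :=
  univ.filter (fun w => G.Reachable v w)

lemma mem_cF {G : SimpleGraph V} {v w : V} : w ∈ cF G v ↔ G.Reachable v w := by
  simp [cF]

lemma self_mem_cF {G : SimpleGraph V} (v : V) : v ∈ cF G v := mem_cF.mpr (Reachable.refl v)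

lemma cF_eq_iff {G : SimpleGraph V} {v w : V} : cF G v = cF G w ↔ G.Reachable v w := by
  constructor
  · intro h
    exact mem_cF.mp (h ▸ self_mem_cF w)
  · intro h
    ext x
    simp only [mem_cF]
    exact ⟨fun hx => h.symm.trans hx, fun hx => h.trans hx⟩

noncomputable def comps (G : SimpleGraph V) : Finset (Finset V) := univ.image (cF G)

lemma comps_nonempty {G : SimpleGraph V} {A : Finset V} (h : A ∈ comps G) : A.Nonempty := by
  obtain ⟨v, _, rfl⟩ := mem_image.mp h
  exact ⟨v, self_mem_cF v⟩

lemma comps_disj {G : SimpleGraph V} {A B : Finset V} (hA : A ∈ comps G) (hB : B ∈ comps G)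
    (hx : ∃ x, x ∈ A ∧ x ∈ B) : A = B := by
  obtain ⟨v, _, rfl⟩ := mem_image.mp hA
  obtain ⟨w, _, rfl⟩ := mem_image.mp hB
  obtain ⟨x, hxA, hxB⟩ := hx
  exact cF_eq_iff.mpr ((mem_cF.mp hxA).trans (mem_cF.mp hxB).symm)

lemma kappa_eq_card_comps (G : SimpleGraph V) : kappa G = (comps G).card := by
  have hrep : ∀ A : {A // A ∈ comps G}, ∃ v : V, cF G v = A.1 := by
    intro A; obtain ⟨v, _, hv⟩ := mem_image.mp A.2; exact ⟨v, hv⟩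
  choose rep hrep using hrep
  have e : G.ConnectedComponent ≃ {A // A ∈ comps G} :=
    { toFun := Quot.lift (fun v => ⟨cF G v, mem_image_of_mem _ (mem_univ v)⟩)
        (fun v w h => Subtype.ext (cF_eq_iff.mpr h))
      invFun := fun A => G.connectedComponentMk (rep A)
      left_inv := by
        intro c
        obtain ⟨v, rfl⟩ := c.exists_rep
        exact ConnectedComponent.eq.mpr (cF_eq_iff.mp (hrep _))
      right_inv := by
        intro A
        exact Subtype.ext (hrep A) }
  show Nat.card _ = _
  rw [Nat.card_congr e]
  exact Nat.card_eq_finsetCard _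

lemma sum_comps_card (G : SimpleGraph V) :
    ∑ A ∈ comps G, A.card = Fintype.card V := by
  have h := Finset.card_eq_sum_card_fiberwise
    (f := cF G) (s := univ) (t := comps G)
    (fun v _ => mem_image_of_mem _ (mem_univ v))
  rw [Finset.card_univ] at h
  rw [h]
  refine Finset.sum_congr rfl (fun A hA => ?_)
  congr 1
  ext w
  simp only [mem_filter, mem_univ, true_and]
  obtain ⟨v, _, rfl⟩ := mem_image.mp hA
  constructor
  · intro hw
    exact cF_eq_iff.mpr (mem_cF.mp hw).symm
  · intro hw
    exact hw ▸ self_mem_cF w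

lemma kappa_eq_one_iff (G : SimpleGraph V) :
    kappa G = 1 ↔ (Nonempty V ∧ ∀ u v : V, G.Reachable u v) := by
  show Nat.card _ = 1 ↔ _
  rw [Nat.card_eq_one_iff_unique]
  constructor
  · rintro ⟨hs, hn⟩
    obtain ⟨c⟩ := hn
    obtain ⟨v, _⟩ := c.exists_rep
    refine ⟨⟨v⟩, fun u w => ?_⟩
    exact ConnectedComponent.eq.mp (hs.elim _ _)
  · rintro ⟨⟨v⟩, h⟩
    refine ⟨⟨fun a b => ?_⟩, ⟨G.connectedComponentMk v⟩⟩
    obtain ⟨x, rfl⟩ := a.exists_rep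
    obtain ⟨y, rfl⟩ := b.exists_rep
    exact ConnectedComponent.eq.mpr (h x y)

lemma kappa_pos (G : SimpleGraph V) (h : Nonempty V) : 1 ≤ kappa G := by
  have : Nonempty G.ConnectedComponent := ⟨G.connectedComponentMk h.some⟩
  have : Finite G.ConnectedComponent := Quot.finite _
  exact Nat.card_pos

lemma nonempty_of_kappa_pos {G : SimpleGraph V} (h : 1 ≤ kappa G) : Nonempty V := by
  by_contra hn
  rw [not_nonempty_iff] at hn
  have : IsEmpty G.ConnectedComponent := SimpleGraph.ConnectedComponent.isEmpty
  rw [show kappa G = Nat.card _ from rfl, Nat.card_of_isEmpty] at h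
  omega


section FinStuff
open SimpleGraph Finset
variable {n : ℕ}

abbrev UV (n : ℕ) := ↥(Finset.univ : Finset (Fin n))

def res (G : SimpleGraph (UV n)) (W : Finset (Fin n)) : SimpleGraph ↥W :=
  G.comap (fun a => ⟨↑a, Finset.mem_univ _⟩)

def NC (G : SimpleGraph (UV n)) (W : Finset (Fin n)) : Prop :=
  ∀ x y : UV n, G.Adj x y → (↑x ∈ W ↔ ↑y ∈ W)

lemma NC.compl {G : SimpleGraph (UV n)} {W : Finset (Fin n)} (h : NC G W) : NC G Wᶜ := by
  intro x y hxy
  simp only [Finset.mem_compl]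
  exact not_congr (h x y hxy)

def castG {A B : Finset (Fin n)} (h : A = B) (G : SimpleGraph ↥A) : SimpleGraph ↥B :=
  h ▸ G

lemma cast_app {β : Sort*} (F : ∀ V : Finset (Fin n), SimpleGraph ↥V → β)
    {A B : Finset (Fin n)} (h : A = B) (G : SimpleGraph ↥A) :
    F B (castG h G) = F A G := by subst h; rfl

lemma cast_adj {A B : Finset (Fin n)} (h : A = B) (G : SimpleGraph ↥A) (x y : ↥B) :
    (castG h G).Adj x y ↔ G.Adj ⟨↑x, h.symm ▸ x.2⟩ ⟨↑y, h.symm ▸ y.2⟩ := by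
  subst h; rfl

def Phi (W : Finset (Fin n)) (G₁ : SimpleGraph ↥W) (G₂ : SimpleGraph ↥Wᶜ) :
    SimpleGraph (UV n) :=
  castG (Finset.union_compl W) (glue W Wᶜ G₁ G₂)

lemma Phi_adj {W : Finset (Fin n)} (G₁ : SimpleGraph ↥W) (G₂ : SimpleGraph ↥Wᶜ)
    (x y : UV n) :
    (Phi W G₁ G₂).Adj x y ↔
      ((∃ (ha : ↑x ∈ W) (hb : ↑y ∈ W), G₁.Adj ⟨↑x, ha⟩ ⟨↑y, hb⟩) ∨
       (∃ (ha : ↑x ∈ Wᶜ) (hb : ↑y ∈ Wᶜ), G₂.Adj ⟨↑x, ha⟩ ⟨↑y, hb⟩)) := by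
  rw [Phi, cast_adj]
  rfl

lemma exists_incl_iff {W : Finset (Fin n)} (v : UV n) :
    (∃ a : ↥W, (⟨↑a, Finset.mem_univ _⟩ : UV n) = v) ↔ ↑v ∈ W := by
  constructor
  · rintro ⟨a, rfl⟩; exact a.2
  · intro h; exact ⟨⟨↑v, h⟩, rfl⟩

lemma incl_injective {W : Finset (Fin n)} :
    Function.Injective (fun a : ↥W => (⟨↑a, Finset.mem_univ _⟩ : UV n)) := by
  intro a b h
  have h2 := congrArg Subtype.val h
  exact Subtype.ext h2

lemma reachable_res {G : SimpleGraph (UV n)} {W : Finset (Fin n)} (h : NC G W)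
    {a b : ↥W} (hr : G.Reachable ⟨↑a, Finset.mem_univ _⟩ ⟨↑b, Finset.mem_univ _⟩) :
    (res G W).Reachable a b := by
  refine reachable_comap _ incl_injective ?_ hr
  intro v w hvw
  rw [exists_incl_iff, exists_incl_iff]
  exact h v w hvw

lemma reachable_res' {G : SimpleGraph (UV n)} {W : Finset (Fin n)}
    {a b : ↥W} (hr : (res G W).Reachable a b) :
    G.Reachable ⟨↑a, Finset.mem_univ _⟩ ⟨↑b, Finset.mem_univ _⟩ :=
  reachable_of_comap _ hr

lemma kappa_res_add {G : SimpleGraph (UV n)} {W : Finset (Fin n)} (h : NC G W) :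
    kappa G = kappa (res G W) + kappa (res G Wᶜ) := by
  refine kappa_split G (fun a : ↥W => ⟨↑a, Finset.mem_univ _⟩)
    (fun b : ↥Wᶜ => ⟨↑b, Finset.mem_univ _⟩) incl_injective incl_injective ?_ ?_ ?_
  · rintro a b hab
    have h1 : (↑a : Fin n) ∈ W := a.2
    have h2 : (↑b : Fin n) ∈ Wᶜ := b.2
    have h3 := congrArg Subtype.val hab
    have : (↑a : Fin n) = ↑b := h3
    rw [this] at h1
    exact (Finset.mem_compl.mp h2) h1
  · intro v
    by_cases hv : ↑v ∈ W
    · exact Or.inl ((exists_incl_iff v).mpr hv)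
    · exact Or.inr ((exists_incl_iff v).mpr (Finset.mem_compl.mpr hv))
  · intro v w hvw
    rw [exists_incl_iff, exists_incl_iff]
    exact h v w hvw

lemma kappa_res_union {G : SimpleGraph (UV n)} {W₁ W₂ : Finset (Fin n)}
    (h1 : NC G W₁) (hd : Disjoint W₁ W₂) :
    kappa (res G (W₁ ∪ W₂)) = kappa (res G W₁) + kappa (res G W₂) := by
  have key := kappa_split (res G (W₁ ∪ W₂))
    (fun a : ↥W₁ => (⟨↑a, Finset.mem_union_left _ a.2⟩ : ↥(W₁ ∪ W₂)))
    (fun b : ↥W₂ => (⟨↑b, Finset.mem_union_right _ b.2⟩ : ↥(W₁ ∪ W₂)))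
    (by intro a b h; have h2 := congrArg Subtype.val h; exact Subtype.ext h2)
    (by intro a b h; have h2 := congrArg Subtype.val h; exact Subtype.ext h2)
    ?_ ?_ ?_
  · rw [key]
    rfl
  · rintro a b hab
    have h2 : (↑b : Fin n) ∈ W₂ := b.2
    have h3 := congrArg Subtype.val hab
    have : (↑a : Fin n) = ↑b := h3
    exact Finset.disjoint_left.mp hd (this ▸ a.2) h2
  · intro v
    rcases Finset.mem_union.mp v.2 with hv | hv
    · exact Or.inl ⟨⟨↑v, hv⟩, rfl⟩
    · exact Or.inr ⟨⟨↑v, hv⟩, rfl⟩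
  · intro v w hvw
    have hiff : ∀ u : ↥(W₁ ∪ W₂),
        (∃ a : ↥W₁, (⟨↑a, Finset.mem_union_left _ a.2⟩ : ↥(W₁ ∪ W₂)) = u) ↔ ↑u ∈ W₁ := by
      intro u
      constructor
      · rintro ⟨a, rfl⟩; exact a.2
      · intro h; exact ⟨⟨↑u, h⟩, Subtype.ext rfl⟩
    rw [hiff, hiff]
    exact h1 _ _ hvw

end FinStuff

section Comp
open SimpleGraph Finset
variable {n : ℕ}

noncomputable def cFF (G : SimpleGraph (UV n)) (v : UV n) : Finset (Fin n) :=
  (cF G v).image Subtype.val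

lemma mem_cFF {G : SimpleGraph (UV n)} {v : UV n} {w : Fin n} :
    w ∈ cFF G v ↔ G.Reachable v ⟨w, Finset.mem_univ _⟩ := by
  constructor
  · intro h
    obtain ⟨y, hy, rfl⟩ := mem_image.mp h
    exact mem_cF.mp hy
  · intro h
    exact mem_image.mpr ⟨⟨w, Finset.mem_univ _⟩, mem_cF.mpr h, rfl⟩

lemma NC_cFF (G : SimpleGraph (UV n)) (v : UV n) : NC G (cFF G v) := by
  intro x y hxy
  rw [mem_cFF, mem_cFF]
  exact ⟨fun h => h.trans hxy.reachable, fun h => h.trans hxy.symm.reachable⟩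

lemma cFF_eq_iff {G : SimpleGraph (UV n)} {v w : UV n} :
    cFF G v = cFF G w ↔ G.Reachable v w := by
  rw [show cFF G v = (cF G v).image Subtype.val from rfl,
    show cFF G w = (cF G w).image Subtype.val from rfl]
  constructor
  · intro h
    exact cF_eq_iff.mp (Finset.image_injective Subtype.val_injective h)
  · intro h
    rw [cF_eq_iff.mpr h]

lemma card_cFF {G : SimpleGraph (UV n)} {v : UV n} : (cFF G v).card = (cF G v).card :=
  Finset.card_image_of_injective _ Subtype.val_injective

lemma kappa_res_cFF (G : SimpleGraph (UV n)) (v : UV n) :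
    kappa (res G (cFF G v)) = 1 := by
  rw [kappa_eq_one_iff]
  refine ⟨⟨⟨↑v, mem_cFF.mpr (Reachable.refl _)⟩⟩, ?_⟩
  intro a b
  have ha : G.Reachable v ⟨↑a, Finset.mem_univ _⟩ := mem_cFF.mp a.2
  have hb : G.Reachable v ⟨↑b, Finset.mem_univ _⟩ := mem_cFF.mp b.2
  exact reachable_res (NC_cFF G v) (ha.symm.trans hb)

lemma eq_cFF_of_kappa_one {G : SimpleGraph (UV n)} {W : Finset (Fin n)} (h : NC G W)
    (h1 : kappa (res G W) = 1) {x : UV n} (hx : ↑x ∈ W) : W = cFF G x := by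
  obtain ⟨hne, hconn⟩ := (kappa_eq_one_iff _).mp h1
  ext w
  constructor
  · intro hw
    have hr := reachable_res' (hconn ⟨↑x, hx⟩ ⟨w, hw⟩)
    rw [mem_cFF]
    exact hr
  · intro hw
    have hr : G.Reachable x ⟨w, Finset.mem_univ _⟩ := mem_cFF.mp hw
    exact (reach_closed (p := fun z : UV n => z.1 ∈ W) (fun a b hab => h a b hab) hr).mp hx

lemma cF_res_compl {G : SimpleGraph (UV n)} {W : Finset (Fin n)} (h : NC G W)
    (v : ↥(Wᶜ)) :
    (cF (res G Wᶜ) v).image Subtype.val = cFF G ⟨↑v, Finset.mem_univ _⟩ := by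
  ext w
  constructor
  · intro hw
    obtain ⟨y, hy, rfl⟩ := mem_image.mp hw
    have := reachable_res' (mem_cF.mp hy)
    rw [mem_cFF]
    exact this
  · intro hw
    have hr : G.Reachable ⟨↑v, Finset.mem_univ _⟩ ⟨w, Finset.mem_univ _⟩ := mem_cFF.mp hw
    have hwWc : w ∈ Wᶜ :=
      (reach_closed (p := fun z : UV n => z.1 ∈ Wᶜ) (fun a b hab => h.compl a b hab) hr).mp v.2
    exact mem_image.mpr ⟨⟨w, hwWc⟩, mem_cF.mpr (reachable_res h.compl hr), rfl⟩

lemma NC_Phi {W : Finset (Fin n)} (G₁ : SimpleGraph ↥W) (G₂ : SimpleGraph ↥(Wᶜ)) :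
    NC (Phi W G₁ G₂) W := by
  intro x y hxy
  rw [Phi_adj] at hxy
  rcases hxy with ⟨ha, hb, _⟩ | ⟨ha, hb, _⟩
  · exact iff_of_true ha hb
  · exact iff_of_false (Finset.mem_compl.mp ha) (Finset.mem_compl.mp hb)

lemma res_Phi_left {W : Finset (Fin n)} (G₁ : SimpleGraph ↥W) (G₂ : SimpleGraph ↥(Wᶜ)) :
    res (Phi W G₁ G₂) W = G₁ := by
  ext a b
  show (Phi W G₁ G₂).Adj ⟨↑a, Finset.mem_univ _⟩ ⟨↑b, Finset.mem_univ _⟩ ↔ _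
  rw [Phi_adj]
  constructor
  · rintro (⟨ha, hb, hadj⟩ | ⟨ha, hb, hadj⟩)
    · exact hadj
    · exact absurd a.2 (Finset.mem_compl.mp ha)
  · intro hadj
    exact Or.inl ⟨a.2, b.2, hadj⟩

lemma res_Phi_right {W : Finset (Fin n)} (G₁ : SimpleGraph ↥W) (G₂ : SimpleGraph ↥(Wᶜ)) :
    res (Phi W G₁ G₂) Wᶜ = G₂ := by
  ext a b
  show (Phi W G₁ G₂).Adj ⟨↑a, Finset.mem_univ _⟩ ⟨↑b, Finset.mem_univ _⟩ ↔ _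
  rw [Phi_adj]
  constructor
  · rintro (⟨ha, hb, hadj⟩ | ⟨ha, hb, hadj⟩)
    · exact absurd ha (Finset.mem_compl.mp a.2)
    · exact hadj
  · intro hadj
    exact Or.inr ⟨a.2, b.2, hadj⟩

lemma Phi_res {G : SimpleGraph (UV n)} {W : Finset (Fin n)} (h : NC G W) :
    Phi W (res G W) (res G Wᶜ) = G := by
  ext x y
  rw [Phi_adj]
  constructor
  · rintro (⟨ha, hb, hadj⟩ | ⟨ha, hb, hadj⟩) <;> exact hadj
  · intro hxy
    by_cases hx : ↑x ∈ W
    · exact Or.inl ⟨hx, (h x y hxy).mp hx, hxy⟩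
    · exact Or.inr ⟨Finset.mem_compl.mpr hx,
        Finset.mem_compl.mpr (fun hy => hx ((h x y hxy).mpr hy)), hxy⟩

lemma kappa_Phi {W : Finset (Fin n)} (G₁ : SimpleGraph ↥W) (G₂ : SimpleGraph ↥(Wᶜ)) :
    kappa (Phi W G₁ G₂) = kappa G₁ + kappa G₂ := by
  rw [kappa_res_add (NC_Phi G₁ G₂), res_Phi_left, res_Phi_right]

end Comp

section Count
open SimpleGraph Finset
variable {n : ℕ}

def ltF (A B : Finset (Fin n)) : Prop :=
  A.card < B.card ∨ (A.card = B.card ∧ B.min < A.min)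

lemma ltF_asymm {A B : Finset (Fin n)} (h1 : ltF A B) (h2 : ltF B A) : False := by
  rcases h1 with h1 | ⟨e1, m1⟩ <;> rcases h2 with h2 | ⟨e2, m2⟩
  · omega
  · omega
  · omega
  · exact absurd (m1.trans m2) (lt_irrefl _)

def Dcond (W : Finset (Fin n)) (G₂ : SimpleGraph ↥(Wᶜ)) : Prop :=
  ∀ v : ↥(Wᶜ), ltF ((cF G₂ v).image Subtype.val) W

noncomputable def compsF (G : SimpleGraph (UV n)) : Finset (Finset (Fin n)) :=
  (Finset.univ : Finset (UV n)).image (cFF G)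

lemma mem_compsF {G : SimpleGraph (UV n)} {C : Finset (Fin n)} :
    C ∈ compsF G ↔ ∃ v, cFF G v = C := by
  simp [compsF]

lemma compsF_nonempty {G : SimpleGraph (UV n)} {C : Finset (Fin n)} (h : C ∈ compsF G) :
    C.Nonempty := by
  obtain ⟨v, rfl⟩ := mem_compsF.mp h
  exact ⟨↑v, mem_cFF.mpr (Reachable.refl _)⟩

lemma compsF_eq_of_common {G : SimpleGraph (UV n)} {C D : Finset (Fin n)}
    (hC : C ∈ compsF G) (hD : D ∈ compsF G) {w : Fin n} (hwC : w ∈ C) (hwD : w ∈ D) :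
    C = D := by
  obtain ⟨v, rfl⟩ := mem_compsF.mp hC
  obtain ⟨u, rfl⟩ := mem_compsF.mp hD
  exact cFF_eq_iff.mpr ((mem_cFF.mp hwC).trans (mem_cFF.mp hwD).symm)

lemma compsF_disjoint {G : SimpleGraph (UV n)} {C D : Finset (Fin n)}
    (hC : C ∈ compsF G) (hD : D ∈ compsF G) (hne : C ≠ D) : Disjoint C D := by
  rw [Finset.disjoint_left]
  intro w hwC hwD
  exact hne (compsF_eq_of_common hC hD hwC hwD)

lemma compsF_eq_image {G : SimpleGraph (UV n)} :
    compsF G = (comps G).image (Finset.image Subtype.val) := by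
  ext C
  simp only [compsF, comps, Finset.mem_image, cFF, Finset.mem_univ, true_and]
  constructor
  · rintro ⟨v, rfl⟩
    exact ⟨cF G v, ⟨v, rfl⟩, rfl⟩
  · rintro ⟨A, ⟨v, rfl⟩, rfl⟩
    exact ⟨v, rfl⟩

lemma card_compsF {G : SimpleGraph (UV n)} : (compsF G).card = kappa G := by
  rw [kappa_eq_card_comps, compsF_eq_image]
  apply Finset.card_image_of_injective
  intro a b h
  exact Finset.image_injective Subtype.val_injective h

lemma sum_compsF {G : SimpleGraph (UV n)} : ∑ C ∈ compsF G, C.card = n := by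
  rw [compsF_eq_image]
  rw [Finset.sum_image (fun x _ y _ h => Finset.image_injective Subtype.val_injective h)]
  have h2 : ∀ A ∈ comps G, (A.image Subtype.val).card = A.card :=
    fun A _ => Finset.card_image_of_injective _ Subtype.val_injective
  rw [Finset.sum_congr rfl h2, sum_comps_card]
  simp

lemma NC_union {G : SimpleGraph (UV n)} {W₁ W₂ : Finset (Fin n)}
    (h1 : NC G W₁) (h2 : NC G W₂) : NC G (W₁ ∪ W₂) := by
  intro x y hxy
  rw [Finset.mem_union, Finset.mem_union]
  exact or_congr (h1 x y hxy) (h2 x y hxy)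

lemma exists_max_compF (G : SimpleGraph (UV n)) (hne : (compsF G).Nonempty) :
    ∃ A ∈ compsF G, ∀ B ∈ compsF G, B ≠ A → ltF B A := by
  obtain ⟨A₀, hA₀, hmax⟩ := (compsF G).exists_max_image Finset.card hne
  set T := (compsF G).filter (fun B => B.card = A₀.card) with hT
  have hA₀T : A₀ ∈ T := mem_filter.mpr ⟨hA₀, rfl⟩
  obtain ⟨A, hAT, hAmin⟩ := T.exists_min_image Finset.min ⟨A₀, hA₀T⟩
  obtain ⟨hAS, hAcard⟩ := mem_filter.mp hAT
  refine ⟨A, hAS, ?_⟩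
  intro B hB hBA
  rcases lt_or_eq_of_le (hmax B hB) with h | h
  · exact Or.inl (h.trans_eq hAcard.symm)
  · have hBT : B ∈ T := mem_filter.mpr ⟨hB, h⟩
    refine Or.inr ⟨h.trans hAcard.symm, ?_⟩
    have hle := hAmin B hBT
    rcases lt_or_eq_of_le hle with h' | h'
    · exact h'
    · exfalso
      obtain ⟨a, ha⟩ := Finset.min_of_nonempty (compsF_nonempty hAS)
      have haA : a ∈ A := Finset.mem_of_min ha
      have haB : a ∈ B := Finset.mem_of_min (by rw [← h', ha])
      exact hBA (compsF_eq_of_common hB hAS haB haA)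

lemma count_upper {G : SimpleGraph (UV n)} {b m₀ : ℕ} :
    ((Finset.univ : Finset (Finset (Fin n))).filter (fun W => m₀ ≤ W.card ∧ NC G W ∧
      kappa (res G W) = 1 ∧ kappa (res G Wᶜ) = b ∧ Dcond W (res G Wᶜ))).card ≤ 1 := by
  rw [Finset.card_le_one]
  intro W hW W' hW'
  obtain ⟨-, hm, hNC, h1, hb, hD⟩ :
      W ∈ univ ∧ m₀ ≤ W.card ∧ NC G W ∧ kappa (res G W) = 1 ∧
        kappa (res G Wᶜ) = b ∧ Dcond W (res G Wᶜ) := by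
    have := mem_filter.mp hW
    exact ⟨this.1, this.2.1, this.2.2.1, this.2.2.2.1, this.2.2.2.2.1, this.2.2.2.2.2⟩
  obtain ⟨-, hm', hNC', h1', hb', hD'⟩ :
      W' ∈ univ ∧ m₀ ≤ W'.card ∧ NC G W' ∧ kappa (res G W') = 1 ∧
        kappa (res G W'ᶜ) = b ∧ Dcond W' (res G W'ᶜ) := by
    have := mem_filter.mp hW'
    exact ⟨this.1, this.2.1, this.2.2.1, this.2.2.2.1, this.2.2.2.2.1, this.2.2.2.2.2⟩
  by_contra hne
  have hWne : Nonempty ↥W := nonempty_of_kappa_pos (le_of_eq h1.symm)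
  have hWne' : Nonempty ↥W' := nonempty_of_kappa_pos (le_of_eq h1'.symm)
  obtain ⟨x⟩ := hWne
  obtain ⟨x'⟩ := hWne'
  have hWc : W = cFF G ⟨↑x, Finset.mem_univ _⟩ := eq_cFF_of_kappa_one hNC h1 x.2
  have hWc' : W' = cFF G ⟨↑x', Finset.mem_univ _⟩ := eq_cFF_of_kappa_one hNC' h1' x'.2
  have hWmem : W ∈ compsF G := mem_compsF.mpr ⟨_, hWc.symm⟩
  have hWmem' : W' ∈ compsF G := mem_compsF.mpr ⟨_, hWc'.symm⟩
  have hdisj : Disjoint W W' := compsF_disjoint hWmem hWmem' hne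
  -- x' is in Wᶜ
  have hx'c : (↑x' : Fin n) ∈ Wᶜ :=
    Finset.mem_compl.mpr (Finset.disjoint_right.mp hdisj x'.2)
  have hxc : (↑x : Fin n) ∈ W'ᶜ :=
    Finset.mem_compl.mpr (Finset.disjoint_left.mp hdisj x.2)
  have hD1 := hD ⟨↑x', hx'c⟩
  have hD2 := hD' ⟨↑x, hxc⟩
  rw [cF_res_compl hNC] at hD1
  rw [cF_res_compl hNC'] at hD2
  rw [← hWc'] at hD1
  rw [← hWc] at hD2
  exact ltF_asymm hD1 hD2

lemma count_lower {G : SimpleGraph (UV n)} {b m₀ : ℕ} (hm₀ : 1 ≤ m₀)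
    (hm : (b + 1) * m₀ ≤ n) (hG : kappa G = b + 2) :
    b + 1 ≤ ((Finset.univ : Finset (Finset (Fin n))).filter (fun W => m₀ ≤ W.card ∧ NC G W ∧
      kappa (res G W) = 2 ∧ kappa (res G Wᶜ) = b ∧ Dcond W (res G Wᶜ))).card := by
  have hcard : (compsF G).card = b + 2 := by rw [card_compsF, hG]
  have hne : (compsF G).Nonempty := Finset.card_pos.mp (by omega)
  obtain ⟨A, hA, hmaxA⟩ := exists_max_compF G hne
  have hcard_le : ∀ B ∈ compsF G, B.card ≤ A.card := by
    intro B hB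
    by_cases h : B = A
    · exact le_of_eq (by rw [h])
    · rcases hmaxA B hB h with h' | ⟨h', -⟩
      · exact le_of_lt h'
      · exact le_of_eq h'
  -- the k candidate sets
  have herase : ((compsF G).erase A).card = b + 1 := by
    rw [Finset.card_erase_of_mem hA, hcard]
    omega
  rw [← herase]
  apply Finset.card_le_card_of_injOn (fun B => A ∪ B)
  · intro B hBe
    have hB : B ∈ compsF G := Finset.mem_of_mem_erase hBe
    have hBA : B ≠ A := Finset.ne_of_mem_erase hBe
    have hdAB : Disjoint A B := compsF_disjoint hA hB (Ne.symm hBA)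
    obtain ⟨va, hva⟩ := mem_compsF.mp hA
    obtain ⟨vb, hvb⟩ := mem_compsF.mp hB
    have hNCA : NC G A := hva ▸ NC_cFF G va
    have hNCB : NC G B := hvb ▸ NC_cFF G vb
    have hNCU : NC G (A ∪ B) := NC_union hNCA hNCB
    have hcardU : (A ∪ B).card = A.card + B.card := Finset.card_union_of_disjoint hdAB
    -- m₀ ≤ |A ∪ B|
    have hsum : ∑ C ∈ compsF G, C.card = n := sum_compsF
    have hstep : n ≤ A.card + B.card + (b * A.card) := by
      have h1 : ∑ C ∈ compsF G, C.card =
          A.card + (B.card + ∑ C ∈ ((compsF G).erase A).erase B, C.card) := by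
        rw [← Finset.add_sum_erase _ _ hA, ← Finset.add_sum_erase _ _
          (Finset.mem_erase.mpr ⟨hBA, hB⟩)]
      have h2 : ∑ C ∈ ((compsF G).erase A).erase B, C.card ≤ b * A.card := by
        have hcount : (((compsF G).erase A).erase B).card = b := by
          rw [Finset.card_erase_of_mem (Finset.mem_erase.mpr ⟨hBA, hB⟩), herase]
          omega
        calc ∑ C ∈ ((compsF G).erase A).erase B, C.card
            ≤ ∑ _C ∈ ((compsF G).erase A).erase B, A.card := by
              refine Finset.sum_le_sum ?_
              intro C hC
              exact hcard_le C (Finset.mem_of_mem_erase (Finset.mem_of_mem_erase hC))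
          _ = b * A.card := by rw [Finset.sum_const, hcount, smul_eq_mul]
      omega
    have hm₀U : m₀ ≤ (A ∪ B).card := by
      rw [hcardU]
      have : (b + 1) * m₀ ≤ (b + 1) * (A.card + B.card) := by
        nlinarith [hm, hstep]
      exact Nat.le_of_mul_le_mul_left this (by omega)
    -- kappa of restriction to A ∪ B is 2
    have hk2 : kappa (res G (A ∪ B)) = 2 := by
      rw [kappa_res_union hNCA hdAB]
      rw [← hva, ← hvb, kappa_res_cFF, kappa_res_cFF]
    have hkb : kappa (res G (A ∪ B)ᶜ) = b := by
      have := kappa_res_add (G := G) (W := A ∪ B) hNCU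
      omega
    -- D condition
    have hDU : Dcond (A ∪ B) (res G (A ∪ B)ᶜ) := by
      intro v
      rw [cF_res_compl hNCU]
      have hCmem : cFF G ⟨↑v, Finset.mem_univ _⟩ ∈ compsF G := mem_compsF.mpr ⟨_, rfl⟩
      have hvC : (↑v : Fin n) ∈ cFF G ⟨↑v, Finset.mem_univ _⟩ :=
        mem_cFF.mpr (Reachable.refl _)
      have hvnA : (↑v : Fin n) ∉ A := by
        intro hcon
        have := Finset.mem_compl.mp v.2
        exact this (Finset.mem_union_left _ hcon)
      have hCcard : (cFF G ⟨↑v, Finset.mem_univ _⟩).card ≤ A.card := hcard_le _ hCmem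
      have hBpos : 0 < B.card := Finset.card_pos.mpr (compsF_nonempty hB)
      left
      rw [hcardU]
      omega
    exact mem_filter.mpr ⟨mem_univ _, hm₀U, hNCU, hk2, hkb, hDU⟩
  · intro B hBe B' hBe' heq
    simp only [Finset.coe_mem] at *
    have hB : B ∈ compsF G := Finset.mem_of_mem_erase (by exact hBe)
    have hB' : B' ∈ compsF G := Finset.mem_of_mem_erase (by exact hBe')
    have hdAB : Disjoint A B := compsF_disjoint hA hB
      (Ne.symm (Finset.ne_of_mem_erase (by exact hBe)))
    have hdAB' : Disjoint A B' := compsF_disjoint hA hB'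
      (Ne.symm (Finset.ne_of_mem_erase (by exact hBe')))
    have h1 : (A ∪ B) \ A = B := Finset.union_sdiff_cancel_left hdAB
    have h2 : (A ∪ B') \ A = B' := Finset.union_sdiff_cancel_left hdAB'
    rw [← h1, ← h2, heq]

end Count

section Main
open SimpleGraph Finset
variable {n : ℕ}

lemma sum_identity (μ : ∀ V : Finset (Fin n), SimpleGraph ↥V → ℝ)
    (hmult : ∀ V₁ V₂ : Finset (Fin n), V₁.Nonempty → V₂.Nonempty →
      Disjoint V₁ V₂ → ∀ (G₁ : SimpleGraph ↥V₁) (G₂ : SimpleGraph ↥V₂),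
        μ (V₁ ∪ V₂) (glue V₁ V₂ G₁ G₂) = μ V₁ G₁ * μ V₂ G₂)
    (m₀ a b : ℕ) (ha : 1 ≤ a) (hb : 1 ≤ b) :
    ∑ W ∈ (Finset.univ : Finset (Finset (Fin n))).filter (fun W => m₀ ≤ W.card),
      (∑ G₁ ∈ (Finset.univ : Finset (SimpleGraph ↥W)).filter (fun G₁ => kappa G₁ = a), μ W G₁) *
      (∑ G₂ ∈ (Finset.univ : Finset (SimpleGraph ↥(Wᶜ))).filter
          (fun G₂ => kappa G₂ = b ∧ Dcond W G₂), μ Wᶜ G₂)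
    = ∑ G ∈ (Finset.univ : Finset (SimpleGraph (Stmt14.UV n))).filter (fun G => kappa G = a + b),
        (((Finset.univ : Finset (Finset (Fin n))).filter (fun W => m₀ ≤ W.card ∧ NC G W ∧
          kappa (res G W) = a ∧ kappa (res G Wᶜ) = b ∧ Dcond W (res G Wᶜ))).card : ℝ)
          * μ Finset.univ G := by
  have step1 : ∀ W : Finset (Fin n),
      (∑ G₁ ∈ (Finset.univ : Finset (SimpleGraph ↥W)).filter (fun G₁ => kappa G₁ = a), μ W G₁) *
      (∑ G₂ ∈ (Finset.univ : Finset (SimpleGraph ↥(Wᶜ))).filter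
          (fun G₂ => kappa G₂ = b ∧ Dcond W G₂), μ Wᶜ G₂)
      = ∑ G ∈ (Finset.univ : Finset (SimpleGraph (Stmt14.UV n))).filter
          (fun G => NC G W ∧ kappa (res G W) = a ∧ kappa (res G Wᶜ) = b ∧
            Dcond W (res G Wᶜ)), μ Finset.univ G := by
    intro W
    rw [Finset.sum_mul_sum, ← Finset.sum_product']
    refine Finset.sum_nbij' (fun p => Phi W p.1 p.2)
      (fun G => (res G W, res G Wᶜ)) ?_ ?_ ?_ ?_ ?_
    · rintro ⟨G₁, G₂⟩ hp
      rw [Finset.mem_product] at hp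
      obtain ⟨h1, h2⟩ := hp
      rw [Finset.mem_filter] at h1 h2 ⊢
      refine ⟨mem_univ _, NC_Phi _ _, ?_, ?_, ?_⟩
      · rw [res_Phi_left]; exact h1.2
      · rw [res_Phi_right]; exact h2.2.1
      · rw [res_Phi_right]; exact h2.2.2
    · intro G hG
      rw [Finset.mem_filter] at hG
      rw [Finset.mem_product, Finset.mem_filter, Finset.mem_filter]
      exact ⟨⟨mem_univ _, hG.2.2.1⟩, mem_univ _, hG.2.2.2.1, hG.2.2.2.2⟩
    · rintro ⟨G₁, G₂⟩ hp
      exact Prod.ext (res_Phi_left G₁ G₂) (res_Phi_right G₁ G₂)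
    · intro G hG
      rw [Finset.mem_filter] at hG
      exact Phi_res hG.2.1
    · rintro ⟨G₁, G₂⟩ hp
      rw [Finset.mem_product] at hp
      obtain ⟨h1, h2⟩ := hp
      rw [Finset.mem_filter] at h1 h2
      have hWne : W.Nonempty := Finset.nonempty_coe_sort.mp
        (nonempty_of_kappa_pos (h1.2.symm ▸ ha))
      have hWcne : (Wᶜ : Finset (Fin n)).Nonempty := Finset.nonempty_coe_sort.mp
        (nonempty_of_kappa_pos (h2.2.1.symm ▸ hb))
      have hglue := hmult W Wᶜ hWne hWcne disjoint_compl_right G₁ G₂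
      have hcast := cast_app (F := μ) (Finset.union_compl W) (glue W Wᶜ G₁ G₂)
      show μ W G₁ * μ Wᶜ G₂ = μ Finset.univ (Phi W G₁ G₂)
      rw [show Phi W G₁ G₂ = castG (Finset.union_compl W) (glue W Wᶜ G₁ G₂) from rfl,
        hcast, hglue]
  rw [Finset.sum_congr rfl (fun W _ => step1 W)]
  rw [Finset.sum_filter]
  have step2 : ∀ W : Finset (Fin n),
      (if m₀ ≤ W.card then
        ∑ G ∈ (Finset.univ : Finset (SimpleGraph (Stmt14.UV n))).filter
          (fun G => NC G W ∧ kappa (res G W) = a ∧ kappa (res G Wᶜ) = b ∧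
            Dcond W (res G Wᶜ)), μ Finset.univ G
      else 0)
      = ∑ G ∈ (Finset.univ : Finset (SimpleGraph (UV n))),
          (if m₀ ≤ W.card ∧ NC G W ∧ kappa (res G W) = a ∧ kappa (res G Wᶜ) = b ∧
            Dcond W (res G Wᶜ) then μ Finset.univ G else 0) := by
    intro W
    split_ifs with h
    · rw [Finset.sum_filter]
      refine Finset.sum_congr rfl (fun G _ => ?_)
      by_cases hc : NC G W ∧ kappa (res G W) = a ∧ kappa (res G Wᶜ) = b ∧
          Dcond W (res G Wᶜ)
      · rw [if_pos hc, if_pos ⟨h, hc⟩]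
      · rw [if_neg hc, if_neg (fun hh => hc hh.2)]
    · symm
      apply Finset.sum_eq_zero
      intro G _
      rw [if_neg (fun hh => h hh.1)]
  rw [Finset.sum_congr rfl (fun W _ => step2 W)]
  rw [Finset.sum_comm]
  have step3 : ∀ G : SimpleGraph (UV n),
      (∑ W ∈ (Finset.univ : Finset (Finset (Fin n))),
        (if m₀ ≤ W.card ∧ NC G W ∧ kappa (res G W) = a ∧ kappa (res G Wᶜ) = b ∧
          Dcond W (res G Wᶜ) then μ Finset.univ G else 0))
      = (((Finset.univ : Finset (Finset (Fin n))).filter (fun W => m₀ ≤ W.card ∧ NC G W ∧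
          kappa (res G W) = a ∧ kappa (res G Wᶜ) = b ∧ Dcond W (res G Wᶜ))).card : ℝ)
          * μ Finset.univ G := by
    intro G
    rw [← Finset.sum_filter, Finset.sum_const, nsmul_eq_mul]
  rw [Finset.sum_congr rfl (fun G _ => step3 G)]
  symm
  apply Finset.sum_filter_of_ne
  intro G _ hne
  by_contra hcon
  apply hne
  have hempty : ((Finset.univ : Finset (Finset (Fin n))).filter (fun W => m₀ ≤ W.card ∧ NC G W ∧
      kappa (res G W) = a ∧ kappa (res G Wᶜ) = b ∧ Dcond W (res G Wᶜ))) = ∅ := by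
    rw [Finset.filter_eq_empty_iff]
    intro W _
    rintro ⟨-, hNC, hra, hrb, -⟩
    exact hcon (by rw [kappa_res_add hNC, hra, hrb])
  rw [hempty]
  simp

end Main

end Stmt14

end Stmt14Aux

/-- if `μ_n` is a measure on graphs with vertex set a subset of `[n]`
which is multiplicative on components, and `μ_n(G²_V) ≤ α·μ_n(G¹_V)` for all
`V ⊆ [n]` with `|V| ≥ m₀`, then `μ_n(G^{k+1}_{[n]}) ≤ (α/k)·μ_n(G^k_{[n]})`
whenever `k ≥ 1` and `n ≥ k·m₀`. -/
theorem stmt14 {n : ℕ} (μ : ∀ V : Finset (Fin n), SimpleGraph ↥V → ℝ)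
    (hμ0 : ∀ V G, 0 ≤ μ V G)
    (hmult : ∀ V₁ V₂ : Finset (Fin n), V₁.Nonempty → V₂.Nonempty →
      Disjoint V₁ V₂ → ∀ (G₁ : SimpleGraph ↥V₁) (G₂ : SimpleGraph ↥V₂),
        μ (V₁ ∪ V₂) (glue V₁ V₂ G₁ G₂) = μ V₁ G₁ * μ V₂ G₂)
    (α : ℝ) (hα : 0 < α) (m₀ : ℕ) (hm₀ : 1 ≤ m₀) (hm₀n : m₀ ≤ n)
    (hyp : ∀ V : Finset (Fin n), m₀ ≤ V.card →
      ∑ G ∈ (Finset.univ : Finset (SimpleGraph ↥V)).filter (fun G => kappa G = 2),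
          μ V G ≤
        α * ∑ G ∈ (Finset.univ : Finset (SimpleGraph ↥V)).filter
          (fun G => kappa G = 1), μ V G)
    (k : ℕ) (hk : 1 ≤ k) (hkn : k * m₀ ≤ n) :
    ∑ G ∈ (Finset.univ : Finset (SimpleGraph ↥(Finset.univ : Finset (Fin n)))).filter
        (fun G => kappa G = k + 1), μ Finset.univ G ≤
      α / k * ∑ G ∈ (Finset.univ :
          Finset (SimpleGraph ↥(Finset.univ : Finset (Fin n)))).filter
        (fun G => kappa G = k), μ Finset.univ G := by
  classical
  have hn : (Finset.univ : Finset (Fin n)).card = n := by simp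
  have hfil : ∀ (j j' : ℕ), j = j' →
      (Finset.univ : Finset (SimpleGraph (Stmt14.UV n))).filter (fun G => kappa G = j) =
      (Finset.univ : Finset (SimpleGraph (Stmt14.UV n))).filter (fun G => kappa G = j') := by
    rintro j j' rfl; rfl
  rcases Nat.lt_or_ge k 2 with hk2 | hk2
  · have hk1 : k = 1 := by omega
    subst hk1
    have h := hyp Finset.univ (by rw [hn]; omega)
    simpa using h
  · obtain ⟨b, rfl⟩ : ∃ b, k = b + 1 := ⟨k - 1, by omega⟩
    have hb : 1 ≤ b := by omega
    -- notation
    have hid2 := Stmt14.sum_identity μ hmult m₀ 2 b (by omega) hb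
    have hid1 := Stmt14.sum_identity μ hmult m₀ 1 b (by omega) hb
    set S2 : ℝ := ∑ G ∈ (Finset.univ : Finset (SimpleGraph (Stmt14.UV n))).filter
        (fun G => kappa G = 2 + b), μ Finset.univ G with hS2
    set S1 : ℝ := ∑ G ∈ (Finset.univ : Finset (SimpleGraph (Stmt14.UV n))).filter
        (fun G => kappa G = 1 + b), μ Finset.univ G with hS1
    have key : ((b:ℝ) + 1) * S2 ≤ α * S1 := by
      have low : ((b:ℝ) + 1) * S2 ≤
          ∑ G ∈ (Finset.univ : Finset (SimpleGraph (Stmt14.UV n))).filter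
            (fun G => kappa G = 2 + b),
            (((Finset.univ : Finset (Finset (Fin n))).filter (fun W => m₀ ≤ W.card ∧
              Stmt14.NC G W ∧ kappa (Stmt14.res G W) = 2 ∧
              kappa (Stmt14.res G Wᶜ) = b ∧
              Stmt14.Dcond W (Stmt14.res G Wᶜ))).card : ℝ) * μ Finset.univ G := by
        rw [hS2, Finset.mul_sum]
        refine Finset.sum_le_sum ?_
        intro G hG
        have hGk : kappa G = b + 2 := by
          have := (Finset.mem_filter.mp hG).2
          omega
        have hcnt := Stmt14.count_lower (G := G) (b := b) (m₀ := m₀) hm₀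
          (by omega) hGk
        refine mul_le_mul_of_nonneg_right ?_ (hμ0 _ _)
        have : ((b + 1 : ℕ) : ℝ) ≤ _ := Nat.cast_le.mpr hcnt
        push_cast at this ⊢
        linarith
      rw [← hid2] at low
      have mid : ∑ W ∈ (Finset.univ : Finset (Finset (Fin n))).filter (fun W => m₀ ≤ W.card),
          (∑ G₁ ∈ (Finset.univ : Finset (SimpleGraph ↥W)).filter (fun G₁ => kappa G₁ = 2),
            μ W G₁) *
          (∑ G₂ ∈ (Finset.univ : Finset (SimpleGraph ↥(Wᶜ))).filter
            (fun G₂ => kappa G₂ = b ∧ Stmt14.Dcond W G₂), μ Wᶜ G₂)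
          ≤ α * ∑ W ∈ (Finset.univ : Finset (Finset (Fin n))).filter (fun W => m₀ ≤ W.card),
          (∑ G₁ ∈ (Finset.univ : Finset (SimpleGraph ↥W)).filter (fun G₁ => kappa G₁ = 1),
            μ W G₁) *
          (∑ G₂ ∈ (Finset.univ : Finset (SimpleGraph ↥(Wᶜ))).filter
            (fun G₂ => kappa G₂ = b ∧ Stmt14.Dcond W G₂), μ Wᶜ G₂) := by
        rw [Finset.mul_sum]
        refine Finset.sum_le_sum ?_
        intro W hW
        have hm := (Finset.mem_filter.mp hW).2
        have h2 := hyp W hm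
        rw [← mul_assoc]
        refine mul_le_mul_of_nonneg_right h2 ?_
        exact Finset.sum_nonneg (fun G₂ _ => hμ0 _ _)
      have up : α * ∑ W ∈ (Finset.univ : Finset (Finset (Fin n))).filter (fun W => m₀ ≤ W.card),
          (∑ G₁ ∈ (Finset.univ : Finset (SimpleGraph ↥W)).filter (fun G₁ => kappa G₁ = 1),
            μ W G₁) *
          (∑ G₂ ∈ (Finset.univ : Finset (SimpleGraph ↥(Wᶜ))).filter
            (fun G₂ => kappa G₂ = b ∧ Stmt14.Dcond W G₂), μ Wᶜ G₂)
          ≤ α * S1 := by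
        refine mul_le_mul_of_nonneg_left ?_ (le_of_lt hα)
        rw [hid1, hS1]
        refine Finset.sum_le_sum ?_
        intro G hG
        have hcnt := Stmt14.count_upper (G := G) (b := b) (m₀ := m₀)
        have hle : (((Finset.univ : Finset (Finset (Fin n))).filter (fun W => m₀ ≤ W.card ∧
            Stmt14.NC G W ∧ kappa (Stmt14.res G W) = 1 ∧ kappa (Stmt14.res G Wᶜ) = b ∧
            Stmt14.Dcond W (Stmt14.res G Wᶜ))).card : ℝ) ≤ 1 := by
          exact_mod_cast hcnt
        calc (((Finset.univ : Finset (Finset (Fin n))).filter (fun W => m₀ ≤ W.card ∧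
            Stmt14.NC G W ∧ kappa (Stmt14.res G W) = 1 ∧ kappa (Stmt14.res G Wᶜ) = b ∧
            Stmt14.Dcond W (Stmt14.res G Wᶜ))).card : ℝ) * μ Finset.univ G
            ≤ 1 * μ Finset.univ G := mul_le_mul_of_nonneg_right hle (hμ0 _ _)
          _ = μ Finset.univ G := one_mul _
      exact le_trans low (le_trans mid up)
    -- conclude
    have hcast : ((b:ℝ) + 1) = ((b + 1 : ℕ) : ℝ) := by push_cast; ring
    have hpos : (0:ℝ) < (b:ℝ) + 1 := by positivity
    rw [hfil (b + 1 + 1) (2 + b) (by omega), hfil (b + 1) (1 + b) (by omega)]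
    rw [← hS2, ← hS1]
    rw [div_mul_eq_mul_div, le_div_iff₀ (by exact_mod_cast hpos)]
    calc S2 * ((b + 1 : ℕ) : ℝ) = ((b:ℝ) + 1) * S2 := by push_cast; ring
      _ ≤ α * S1 := key
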